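/- Let d ≥ 2 and let ρ > 0 with ρ ≠ 1. Define ψ(ξ') = 1 − √(1 − |ξ'|²) for ξ' ∈ ℝ^{d−1} with |ξ'| < 1, and b_δ(τ, ξ') = ρ²δ / ((τ(τ + 2ψ(ξ') − 2) + 1 − ρ)² + (ρδ)²) · |ξ'|² / (τ + ψ(ξ') − 1)². Then there exists ε∘ > 0 (depending on ρ) such that for every n ∈ ℕ there is a constant C_n > 0 with the following property: for all δ ∈ (0,1], all τ ∈ ℝ with |τ| ≤ 2ε∘, and all ξ' ∈ ℝ^{d−1} with |ξ'| ≤ 1/10, ‖D^n_{ξ'} b_δ(τ, ξ')‖ ≤ C_n · δ / ((τ(τ + 2ψ(ξ') − 2) + 1 − ρ)² + (ρδ)²) ≤ C_n' δ for some constant C_n' depending only on n, d, ρ. -/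

import Mathlib

open Real
open scoped ENNReal

noncomputable section

/-- `ψ(ξ') = 1 − √(1 − |ξ'|²)` on `ℝ^{d−1}`. -/
def psiFn (m : ℕ) (w : EuclideanSpace ℝ (Fin m)) : ℝ := 1 - Real.sqrt (1 - ‖w‖ ^ 2)

/-- `b_δ(τ, ξ') = ρ²δ/((τ(τ+2ψ(ξ')−2)+1−ρ)² + (ρδ)²) · |ξ'|²/(τ+ψ(ξ')−1)²`. -/
def bDelta (m : ℕ) (ρ δ τ : ℝ) (w : EuclideanSpace ℝ (Fin m)) : ℝ :=
  ρ ^ 2 * δ / ((τ * (τ + 2 * psiFn m w - 2) + 1 - ρ) ^ 2 + (ρ * δ) ^ 2) *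
    (‖w‖ ^ 2 / (τ + psiFn m w - 1) ^ 2)

/-- auxiliary: the `δ`-independent part of `bDelta`, as a function of `(s, τ, w)`. -/
def Gfun (m : ℕ) (ρ : ℝ) (x : ℝ × ℝ × EuclideanSpace ℝ (Fin m)) : ℝ :=
  ρ ^ 2 / ((x.2.1 * (x.2.1 + 2 * psiFn m x.2.2 - 2) + 1 - ρ) ^ 2 + (ρ * x.1) ^ 2) *
    (‖x.2.2‖ ^ 2 / (x.2.1 + psiFn m x.2.2 - 1) ^ 2)

def Uset (m : ℕ) (ρ : ℝ) : Set (ℝ × ℝ × EuclideanSpace ℝ (Fin m)) :=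
  {x | (1 - ‖x.2.2‖ ^ 2 ≠ 0 ∧
    (x.2.1 * (x.2.1 + 2 * psiFn m x.2.2 - 2) + 1 - ρ) ^ 2 + (ρ * x.1) ^ 2 ≠ 0) ∧
    x.2.1 + psiFn m x.2.2 - 1 ≠ 0}

lemma isOpen_Uset (m : ℕ) (ρ : ℝ) : IsOpen (Uset m ρ) := by
  have hv : Continuous (fun x : ℝ × ℝ × EuclideanSpace ℝ (Fin m) => x.2.2) :=
    continuous_snd.comp continuous_snd
  have hτ : Continuous (fun x : ℝ × ℝ × EuclideanSpace ℝ (Fin m) => x.2.1) :=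
    continuous_fst.comp continuous_snd
  have hn2 : Continuous (fun x : ℝ × ℝ × EuclideanSpace ℝ (Fin m) => 1 - ‖x.2.2‖ ^ 2) :=
    continuous_const.sub ((hv.norm).pow 2)
  have hψ : Continuous (fun x : ℝ × ℝ × EuclideanSpace ℝ (Fin m) => psiFn m x.2.2) := by
    simp only [psiFn]
    exact continuous_const.sub (Real.continuous_sqrt.comp hn2)
  have hD1 : Continuous (fun x : ℝ × ℝ × EuclideanSpace ℝ (Fin m) =>
      (x.2.1 * (x.2.1 + 2 * psiFn m x.2.2 - 2) + 1 - ρ) ^ 2 + (ρ * x.1) ^ 2) :=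
    ((((hτ.mul (((hτ.add (continuous_const.mul hψ)).sub continuous_const))).add
      continuous_const).sub continuous_const).pow 2).add ((continuous_const.mul continuous_fst).pow 2)
  have hD2 : Continuous (fun x : ℝ × ℝ × EuclideanSpace ℝ (Fin m) =>
      x.2.1 + psiFn m x.2.2 - 1) := (hτ.add hψ).sub continuous_const
  have heq : Uset m ρ = ((fun x : ℝ × ℝ × EuclideanSpace ℝ (Fin m) =>
        1 - ‖x.2.2‖ ^ 2) ⁻¹' {0}ᶜ ∩ (fun x : ℝ × ℝ × EuclideanSpace ℝ (Fin m) =>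
        (x.2.1 * (x.2.1 + 2 * psiFn m x.2.2 - 2) + 1 - ρ) ^ 2 + (ρ * x.1) ^ 2) ⁻¹' {0}ᶜ) ∩
      (fun x : ℝ × ℝ × EuclideanSpace ℝ (Fin m) => x.2.1 + psiFn m x.2.2 - 1) ⁻¹' {0}ᶜ := by
    ext x
    simp only [Uset, Set.mem_setOf_eq, Set.mem_inter_iff, Set.mem_compl_iff, Set.mem_preimage,
      Set.mem_singleton_iff, Set.preimage_compl]
  rw [heq]
  exact ((hn2.isOpen_preimage _ isOpen_compl_singleton).inter
    (hD1.isOpen_preimage _ isOpen_compl_singleton)).inter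
    (hD2.isOpen_preimage _ isOpen_compl_singleton)

lemma contDiffOn_Gfun (m : ℕ) (ρ : ℝ) :
    ContDiffOn ℝ ((⊤ : ℕ∞) : WithTop ℕ∞) (Gfun m ρ) (Uset m ρ) := by
  intro x hx
  obtain ⟨⟨h1, h2⟩, h3⟩ := hx
  apply ContDiffAt.contDiffWithinAt
  have hw : ContDiff ℝ ((⊤ : ℕ∞) : WithTop ℕ∞)
      (fun x : ℝ × ℝ × EuclideanSpace ℝ (Fin m) => ‖x.2.2‖ ^ 2) :=
    ContDiff.norm_sq (𝕜 := ℝ) (contDiff_snd.comp contDiff_snd)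
  have hτ : ContDiffAt ℝ ((⊤ : ℕ∞) : WithTop ℕ∞)
      (fun x : ℝ × ℝ × EuclideanSpace ℝ (Fin m) => x.2.1) x :=
    (contDiff_fst.comp contDiff_snd).contDiffAt
  have hs : ContDiffAt ℝ ((⊤ : ℕ∞) : WithTop ℕ∞)
      (fun x : ℝ × ℝ × EuclideanSpace ℝ (Fin m) => x.1) x := contDiff_fst.contDiffAt
  have hψ : ContDiffAt ℝ ((⊤ : ℕ∞) : WithTop ℕ∞)
      (fun x : ℝ × ℝ × EuclideanSpace ℝ (Fin m) => psiFn m x.2.2) x := by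
    simp only [psiFn]
    exact contDiffAt_const.sub ((contDiffAt_const.sub hw.contDiffAt).sqrt h1)
  have hD1 : ContDiffAt ℝ ((⊤ : ℕ∞) : WithTop ℕ∞)
      (fun x : ℝ × ℝ × EuclideanSpace ℝ (Fin m) =>
        (x.2.1 * (x.2.1 + 2 * psiFn m x.2.2 - 2) + 1 - ρ) ^ 2 + (ρ * x.1) ^ 2) x :=
    ((((hτ.mul (((hτ.add (contDiffAt_const.mul hψ)).sub contDiffAt_const))).add
      contDiffAt_const).sub contDiffAt_const).pow 2).add ((contDiffAt_const.mul hs).pow 2)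
  have hD2 : ContDiffAt ℝ ((⊤ : ℕ∞) : WithTop ℕ∞)
      (fun x : ℝ × ℝ × EuclideanSpace ℝ (Fin m) =>
        (x.2.1 + psiFn m x.2.2 - 1) ^ 2) x :=
    ((hτ.add hψ).sub contDiffAt_const).pow 2
  exact (contDiffAt_const.div hD1 h2).mul (hw.contDiffAt.div hD2 (pow_ne_zero 2 h3))

set_option maxHeartbeats 2000000 in
/-- **Lemma 3.2, bounds for `b_δ`.** Let `d ≥ 2`, `ρ > 0`, `ρ ≠ 1`.
There is `ε∘ > 0` such that for every `n` there are constants `C_n, C_n' > 0` with: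
for all `δ ∈ (0,1]`, `|τ| ≤ 2ε∘` and `|ξ'| ≤ 1/10`,
`‖D^n_{ξ'} b_δ(τ, ξ')‖ ≤ C_n · δ/((τ(τ+2ψ(ξ')−2)+1−ρ)² + (ρδ)²) ≤ C_n' δ`. -/
theorem bDelta_deriv_bounds (d : ℕ) (hd : 2 ≤ d) (ρ : ℝ) (hρ : 0 < ρ) (hρ1 : ρ ≠ 1) :
    ∃ ε : ℝ, 0 < ε ∧ ∀ n : ℕ, ∃ C C' : ℝ, 0 < C ∧ 0 < C' ∧
      ∀ δ : ℝ, δ ∈ Set.Ioc (0 : ℝ) 1 → ∀ τ : ℝ, |τ| ≤ 2 * ε →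
        ∀ w : EuclideanSpace ℝ (Fin (d - 1)), ‖w‖ ≤ 1 / 10 →
          ‖iteratedFDeriv ℝ n (bDelta (d - 1) ρ δ τ) w‖ ≤
              C * (δ / ((τ * (τ + 2 * psiFn (d - 1) w - 2) + 1 - ρ) ^ 2 + (ρ * δ) ^ 2)) ∧
            C * (δ / ((τ * (τ + 2 * psiFn (d - 1) w - 2) + 1 - ρ) ^ 2 + (ρ * δ) ^ 2)) ≤
              C' * δ := by
  have hρ1' : (0:ℝ) < |1 - ρ| := abs_pos.mpr (sub_ne_zero.mpr (Ne.symm hρ1))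
  have hsubne : (1:ℝ) - ρ ≠ 0 := sub_ne_zero.mpr (Ne.symm hρ1)
  refine ⟨min (|1 - ρ| / 20) (1 / 8), lt_min (by linarith) (by norm_num), fun n => ?_⟩
  set ε : ℝ := min (|1 - ρ| / 20) (1 / 8) with hε_def
  have hεle1 : ε ≤ 1/8 := min_le_right _ _
  have hεleρ : ε ≤ |1-ρ|/20 := min_le_left _ _
  -- quantitative facts on the relevant region
  have key : ∀ τ : ℝ, ∀ v : EuclideanSpace ℝ (Fin (d-1)), |τ| ≤ 2*ε → ‖v‖ ≤ 1/5 →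
      0 ≤ psiFn (d-1) v ∧ psiFn (d-1) v ≤ 1 ∧
      (1-ρ)^2/4 ≤ (τ * (τ + 2 * psiFn (d-1) v - 2) + 1 - ρ)^2 ∧
      (τ * (τ + 2 * psiFn (d-1) v - 2) + 1 - ρ)^2 ≤ 9*(1-ρ)^2/4 ∧
      τ + psiFn (d-1) v - 1 < 0 ∧ (0:ℝ) < 1 - ‖v‖^2 := by
    intro τ v hτ hv
    have hv0 : 0 ≤ ‖v‖ := norm_nonneg v
    have h1v : (0:ℝ) < 1 - ‖v‖^2 := by nlinarith
    have hsqle : Real.sqrt (1 - ‖v‖^2) ≤ 1 := Real.sqrt_le_one.mpr (by nlinarith)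
    have hsq0 : 0 ≤ Real.sqrt (1 - ‖v‖^2) := Real.sqrt_nonneg _
    have hsqge : (9/10:ℝ) ≤ Real.sqrt (1 - ‖v‖^2) := by
      have h1 : ((9/10:ℝ))^2 ≤ 1 - ‖v‖^2 := by nlinarith
      have h2 := Real.sqrt_le_sqrt h1
      rwa [Real.sqrt_sq (by norm_num : (0:ℝ) ≤ 9/10)] at h2
    have hψ0 : 0 ≤ psiFn (d-1) v := by simp only [psiFn]; linarith
    have hψ110 : psiFn (d-1) v ≤ 1/10 := by simp only [psiFn]; linarith
    have hψ1 : psiFn (d-1) v ≤ 1 := le_trans hψ110 (by norm_num)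
    set ψ := psiFn (d-1) v with hψdef
    have hτ' : |τ| ≤ 1/4 := le_trans hτ (by linarith)
    have hτρ : |τ| ≤ |1-ρ|/10 := le_trans hτ (by linarith)
    have hτ'' := abs_le.mp hτ'
    have habs : |τ * (τ + 2 * ψ - 2)| ≤ |1-ρ|/4 := by
      rw [abs_mul]
      have h2 : |τ + 2 * ψ - 2| ≤ 9/4 := by
        rw [abs_le]; constructor <;> nlinarith
      calc |τ| * |τ + 2 * ψ - 2| ≤ (|1-ρ|/10) * (9/4) :=
            mul_le_mul hτρ h2 (abs_nonneg _) (by positivity)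
        _ ≤ |1-ρ|/4 := by linarith
    have habs2 : |τ * (τ + 2 * ψ - 2) * (1-ρ)| ≤ (1-ρ)^2/4 := by
      rw [abs_mul]
      calc |τ * (τ + 2 * ψ - 2)| * |1-ρ| ≤ (|1-ρ|/4) * |1-ρ| :=
            mul_le_mul_of_nonneg_right habs (abs_nonneg _)
        _ = (1-ρ)^2/4 := by rw [← sq_abs (1-ρ)]; ring
    have hta := abs_le.mp habs2
    have htabs := abs_le.mp habs
    have ht2 : (τ * (τ + 2 * ψ - 2))^2 ≤ (1-ρ)^2/16 := by
      have h := sq_le_sq' htabs.1 htabs.2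
      have h2 : (|1-ρ|/4)^2 = (1-ρ)^2/16 := by rw [div_pow, sq_abs]; norm_num
      linarith
    refine ⟨hψ0, hψ1, ?_, ?_, ?_, h1v⟩
    · nlinarith [hta.1, hta.2, sq_nonneg (τ * (τ + 2 * ψ - 2))]
    · nlinarith [hta.1, hta.2, ht2]
    · linarith [hτ''.2]
  -- smoothness setup
  have hUo := isOpen_Uset (d-1) ρ
  have hUu : UniqueDiffOn ℝ (Uset (d-1) ρ) := hUo.uniqueDiffOn
  have hG := contDiffOn_Gfun (d-1) ρ
  set K : Set (ℝ × ℝ × EuclideanSpace ℝ (Fin (d-1))) :=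
    Set.Icc (0:ℝ) 1 ×ˢ Set.Icc (-(2*ε)) (2*ε) ×ˢ Metric.closedBall 0 (1/5) with hK_def
  have hKc : IsCompact K :=
    (isCompact_Icc).prod ((isCompact_Icc).prod (isCompact_closedBall _ _))
  have hKU : K ⊆ Uset (d-1) ρ := by
    rintro ⟨s, τ, v⟩ ⟨hs, hτm, hvm⟩
    have hτ' : |τ| ≤ 2*ε := abs_le.mpr ⟨hτm.1, hτm.2⟩
    have hv' : ‖v‖ ≤ 1/5 := by simpa [mem_closedBall_zero_iff] using hvm
    obtain ⟨hψ0, hψ1, hX1, hX2, hτψ, h1v⟩ := key τ v hτ' hv'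
    refine ⟨⟨ne_of_gt h1v, ?_⟩, ne_of_lt hτψ⟩
    have h4 : (0:ℝ) < (1-ρ)^2/4 := by positivity
    have := sq_nonneg (ρ * s)
    nlinarith
  -- uniform bound for derivatives of Gfun on K
  have hnle : (n : WithTop ℕ∞) ≤ ((⊤ : ℕ∞) : WithTop ℕ∞) := by exact_mod_cast le_top
  have hMex : ∀ i : ℕ, ∃ Mi : ℝ, ∀ x ∈ K,
      ‖iteratedFDerivWithin ℝ i (Gfun (d-1) ρ) (Uset (d-1) ρ) x‖ ≤ Mi := by
    intro i
    have hile : (i : WithTop ℕ∞) ≤ ((⊤ : ℕ∞) : WithTop ℕ∞) := by exact_mod_cast le_top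
    exact hKc.exists_bound_of_continuousOn
      ((hG.continuousOn_iteratedFDerivWithin hile hUu).mono hKU)
  choose Mi hMi using hMex
  set M : ℝ := ∑ i ∈ Finset.range (n+1), |Mi i| with hM_def
  have hM0 : 0 ≤ M := Finset.sum_nonneg fun i _ => abs_nonneg _
  have hMle : ∀ i, i ≤ n → ∀ x ∈ K,
      ‖iteratedFDerivWithin ℝ i (Gfun (d-1) ρ) (Uset (d-1) ρ) x‖ ≤ M := by
    intro i hi x hx
    calc ‖iteratedFDerivWithin ℝ i (Gfun (d-1) ρ) (Uset (d-1) ρ) x‖ ≤ Mi i := hMi i x hx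
      _ ≤ |Mi i| := le_abs_self _
      _ ≤ M := Finset.single_le_sum (f := fun j => |Mi j|)
          (fun j _ => abs_nonneg _) (Finset.mem_range.mpr (Nat.lt_succ_of_le hi))
  -- constants
  have hDmaxpos : (0:ℝ) < 9*(1-ρ)^2/4 + ρ^2 := by positivity
  have hfac0 : (0:ℝ) < (n.factorial : ℝ) * M + 1 := by
    have : (0:ℝ) ≤ (n.factorial : ℝ) * M := mul_nonneg (Nat.cast_nonneg _) hM0
    linarith
  refine ⟨((n.factorial : ℝ) * M + 1) * (9*(1-ρ)^2/4 + ρ^2),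
    4 * (((n.factorial : ℝ) * M + 1) * (9*(1-ρ)^2/4 + ρ^2)) / (1-ρ)^2,
    mul_pos hfac0 hDmaxpos, by positivity, ?_⟩
  intro δ hδ τ hτ w hw
  obtain ⟨hδ0, hδ1⟩ := hδ
  obtain ⟨hψ0, hψ1, hX1, hX2, hτψ, h1w⟩ := key τ w hτ (by linarith)
  have hρδ : (ρ * δ)^2 ≤ ρ^2 := by
    have hδ2 : δ^2 ≤ 1 := by nlinarith
    nlinarith [sq_nonneg ρ]
  have hDpos : (0:ℝ) < (τ * (τ + 2 * psiFn (d-1) w - 2) + 1 - ρ)^2 + (ρ*δ)^2 := by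
    have h4 : (0:ℝ) < (1-ρ)^2/4 := by positivity
    nlinarith [sq_nonneg (ρ*δ)]
  have hDle : (τ * (τ + 2 * psiFn (d-1) w - 2) + 1 - ρ)^2 + (ρ*δ)^2 ≤ 9*(1-ρ)^2/4 + ρ^2 := by
    linarith
  have hDge : (1-ρ)^2/4 ≤ (τ * (τ + 2 * psiFn (d-1) w - 2) + 1 - ρ)^2 + (ρ*δ)^2 := by
    nlinarith [sq_nonneg (ρ*δ)]
  -- the slice map
  set A : EuclideanSpace ℝ (Fin (d-1)) → ℝ × ℝ × EuclideanSpace ℝ (Fin (d-1)) :=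
    fun v => (δ, τ, v) with hA_def
  have hA : ContDiff ℝ ((⊤ : ℕ∞) : WithTop ℕ∞) A :=
    contDiff_const.prodMk (contDiff_const.prodMk contDiff_id)
  have hso : IsOpen (Metric.ball (0 : EuclideanSpace ℝ (Fin (d-1))) (1/5)) := Metric.isOpen_ball
  have hws : w ∈ Metric.ball (0 : EuclideanSpace ℝ (Fin (d-1))) (1/5) := by
    rw [mem_ball_zero_iff]; linarith
  have hmapsK : ∀ v ∈ Metric.ball (0 : EuclideanSpace ℝ (Fin (d-1))) (1/5), A v ∈ K := by
    intro v hv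
    rw [mem_ball_zero_iff] at hv
    exact ⟨⟨hδ0.le, hδ1⟩, Set.mem_Icc.mpr (abs_le.mp hτ), mem_closedBall_zero_iff.mpr hv.le⟩
  have hmaps : Set.MapsTo A (Metric.ball 0 (1/5)) (Uset (d-1) ρ) := fun v hv => hKU (hmapsK v hv)
  have hAwK : A w ∈ K := hmapsK w hws
  -- derivatives of A
  set ℓ : EuclideanSpace ℝ (Fin (d-1)) →L[ℝ] ℝ × ℝ × EuclideanSpace ℝ (Fin (d-1)) :=
    (0 : EuclideanSpace ℝ (Fin (d-1)) →L[ℝ] ℝ).prod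
      ((0 : EuclideanSpace ℝ (Fin (d-1)) →L[ℝ] ℝ).prod
        (ContinuousLinearMap.id ℝ (EuclideanSpace ℝ (Fin (d-1))))) with hℓ_def
  have hfderivA : ∀ y, fderiv ℝ A y = ℓ := fun y =>
    ((hasFDerivAt_const δ y).prodMk ((hasFDerivAt_const τ y).prodMk (hasFDerivAt_id y))).fderiv
  have hℓnorm : ‖ℓ‖ ≤ 1 := by
    refine ContinuousLinearMap.opNorm_le_bound _ zero_le_one fun v => ?_
    rw [one_mul]
    have h1 : ℓ v = (0, 0, v) := rfl
    rw [h1, Prod.norm_def, Prod.norm_def]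
    simp only [norm_zero]
    rw [max_eq_right (norm_nonneg v), max_eq_right (norm_nonneg v)]
  have hDA : ∀ i, 1 ≤ i → i ≤ n →
      ‖iteratedFDerivWithin ℝ i A (Metric.ball 0 (1/5)) w‖ ≤ (1:ℝ)^i := by
    intro i h1i hin
    rw [iteratedFDerivWithin_of_isOpen i hso hws, one_pow]
    obtain ⟨j, rfl⟩ : ∃ j, i = j + 1 := ⟨i-1, (Nat.succ_pred_eq_of_pos h1i).symm⟩
    rw [← norm_iteratedFDeriv_fderiv]
    have hfd : (fderiv ℝ A) = fun _ => ℓ := funext hfderivA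
    rw [hfd]
    cases j with
    | zero => rw [norm_iteratedFDeriv_zero]; exact hℓnorm
    | succ k =>
        rw [iteratedFDeriv_const_of_ne (Nat.succ_ne_zero k)]
        simp
  have hcomp : ‖iteratedFDerivWithin ℝ n (Gfun (d-1) ρ ∘ A) (Metric.ball 0 (1/5)) w‖ ≤
      (n.factorial : ℝ) * M * (1:ℝ)^n :=
    norm_iteratedFDerivWithin_comp_le hG hA.contDiffOn hnle hUu hso.uniqueDiffOn hmaps hws
      (fun i hi => hMle i hi (A w) hAwK) hDA
  -- rewrite bDelta as a scalar multiple of the composition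
  set g : ℝ →L[ℝ] ℝ := δ • ContinuousLinearMap.id ℝ ℝ with hg_def
  have hfun : bDelta (d-1) ρ δ τ = ⇑g ∘ (Gfun (d-1) ρ ∘ A) := by
    funext v
    simp only [bDelta, Gfun, Function.comp_apply, hA_def, hg_def,
      ContinuousLinearMap.smul_apply, ContinuousLinearMap.id_apply, smul_eq_mul]
    ring
  have hGAc : ContDiffOn ℝ ((⊤ : ℕ∞) : WithTop ℕ∞) (Gfun (d-1) ρ ∘ A) (Metric.ball 0 (1/5)) :=
    hG.comp hA.contDiffOn hmaps
  have heq1 : ‖iteratedFDeriv ℝ n (bDelta (d-1) ρ δ τ) w‖ =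
      ‖iteratedFDerivWithin ℝ n (bDelta (d-1) ρ δ τ) (Metric.ball 0 (1/5)) w‖ :=
    (congrArg norm (iteratedFDerivWithin_of_isOpen n hso hws)).symm
  have heq2 : iteratedFDerivWithin ℝ n (bDelta (d-1) ρ δ τ) (Metric.ball 0 (1/5)) w =
      g.compContinuousMultilinearMap
        (iteratedFDerivWithin ℝ n (Gfun (d-1) ρ ∘ A) (Metric.ball 0 (1/5)) w) := by
    rw [hfun]
    exact g.iteratedFDerivWithin_comp_left (hGAc w hws) hso.uniqueDiffOn hws hnle
  have hgnorm : ‖g‖ ≤ δ := by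
    refine ContinuousLinearMap.opNorm_le_bound _ hδ0.le fun x => ?_
    rw [hg_def]
    simp only [ContinuousLinearMap.smul_apply, ContinuousLinearMap.id_apply, smul_eq_mul,
      Real.norm_eq_abs, abs_mul, abs_of_pos hδ0]
    exact le_rfl
  have hmain : ‖iteratedFDeriv ℝ n (bDelta (d-1) ρ δ τ) w‖ ≤ δ * ((n.factorial : ℝ) * M) := by
    rw [heq1, heq2]
    calc ‖g.compContinuousMultilinearMap
          (iteratedFDerivWithin ℝ n (Gfun (d-1) ρ ∘ A) (Metric.ball 0 (1/5)) w)‖ ≤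
        ‖g‖ * ‖iteratedFDerivWithin ℝ n (Gfun (d-1) ρ ∘ A) (Metric.ball 0 (1/5)) w‖ :=
          g.norm_compContinuousMultilinearMap_le _
      _ ≤ δ * ((n.factorial : ℝ) * M) := by
          apply mul_le_mul hgnorm _ (norm_nonneg _) hδ0.le
          simpa using hcomp
  constructor
  · refine le_trans hmain ?_
    have h1 : δ / (9*(1-ρ)^2/4 + ρ^2) ≤
        δ / ((τ * (τ + 2 * psiFn (d-1) w - 2) + 1 - ρ)^2 + (ρ*δ)^2) := by
      rw [div_le_div_iff₀ hDmaxpos hDpos]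
      nlinarith [hDle, hδ0.le]
    have h2 : (((n.factorial : ℝ) * M + 1) * (9*(1-ρ)^2/4 + ρ^2)) *
        (δ / (9*(1-ρ)^2/4 + ρ^2)) = ((n.factorial : ℝ) * M + 1) * δ := by
      field_simp
    calc δ * ((n.factorial : ℝ) * M) ≤ ((n.factorial : ℝ) * M + 1) * δ := by
          nlinarith [hδ0.le]
      _ = (((n.factorial : ℝ) * M + 1) * (9*(1-ρ)^2/4 + ρ^2)) *
          (δ / (9*(1-ρ)^2/4 + ρ^2)) := h2.symm
      _ ≤ (((n.factorial : ℝ) * M + 1) * (9*(1-ρ)^2/4 + ρ^2)) *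
          (δ / ((τ * (τ + 2 * psiFn (d-1) w - 2) + 1 - ρ)^2 + (ρ*δ)^2)) :=
          mul_le_mul_of_nonneg_left h1 (mul_pos hfac0 hDmaxpos).le
  · have h3 : δ / ((τ * (τ + 2 * psiFn (d-1) w - 2) + 1 - ρ)^2 + (ρ*δ)^2) ≤
        δ / ((1-ρ)^2/4) := by
      rw [div_le_div_iff₀ hDpos (by positivity)]
      nlinarith
    have h4 : (((n.factorial : ℝ) * M + 1) * (9*(1-ρ)^2/4 + ρ^2)) * (δ / ((1-ρ)^2/4)) =
        4 * (((n.factorial : ℝ) * M + 1) * (9*(1-ρ)^2/4 + ρ^2)) / (1-ρ)^2 * δ := by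
      field_simp
    calc (((n.factorial : ℝ) * M + 1) * (9*(1-ρ)^2/4 + ρ^2)) *
        (δ / ((τ * (τ + 2 * psiFn (d-1) w - 2) + 1 - ρ)^2 + (ρ*δ)^2)) ≤
        (((n.factorial : ℝ) * M + 1) * (9*(1-ρ)^2/4 + ρ^2)) * (δ / ((1-ρ)^2/4)) :=
          mul_le_mul_of_nonneg_left h3 (mul_pos hfac0 hDmaxpos).le
      _ = 4 * (((n.factorial : ℝ) * M + 1) * (9*(1-ρ)^2/4 + ρ^2)) / (1-ρ)^2 * δ := h4


end
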